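/- Let D be a DAG consistent with a tiered ordering τ, and let A, B be non-adjacent nodes. Then there exists a set S d-separating A and B such that every node of S lies in a tier at most max(τ(A), τ(B)). -/

import Mathlib

/-- Adjacency: an edge in either direction. -/
def Adj {V : Type*} (E : V → V → Prop) (u v : V) : Prop := E u v ∨ E v u

/-- A directed graph is acyclic if no node lies on a directed cycle. -/
def Acyclic {V : Type*} (E : V → V → Prop) : Prop := ∀ v, ¬ Relation.TransGen E v v

/-- `Desc E v w` : `w` is a descendant of `v` (including `v` itself). -/
def Desc {V : Type*} (E : V → V → Prop) (v w : V) : Prop := Relation.ReflTransGen E v w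

/-- A path between `u` and `v`: a nonempty list of distinct, consecutively adjacent
nodes starting at `u` and ending at `v`. -/
def IsPath {V : Type*} (E : V → V → Prop) (u v : V) (p : List V) : Prop :=
  p.Nodup ∧ p.Chain' (Adj E) ∧ p.head? = some u ∧ p.getLast? = some v

/-- The node at (interior) position `i` of the path `p` is a collider:
both path edges point into it. -/
def ColliderAt {V : Type*} (E : V → V → Prop) (p : List V) (i : ℕ) : Prop :=
  0 < i ∧ ∃ a w b, p[i-1]? = some a ∧ p[i]? = some w ∧ p[i+1]? = some b ∧ E a w ∧ E b w

/-- A path is blocked by `S` if it contains an interior non-collider in `S`, or a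
collider none of whose descendants (including itself) is in `S`. -/
def Blocked {V : Type*} (E : V → V → Prop) (S : Set V) (p : List V) : Prop :=
  (∃ i w, 0 < i ∧ i + 1 < p.length ∧ p[i]? = some w ∧ ¬ ColliderAt E p i ∧ w ∈ S) ∨
  (∃ i w, ColliderAt E p i ∧ p[i]? = some w ∧ ∀ d, Desc E w d → d ∉ S)

/-- `S` d-separates `u` and `v`: every path between them is blocked by `S`. -/
def DSep {V : Type*} (E : V → V → Prop) (S : Set V) (u v : V) : Prop :=
  ∀ p, IsPath E u v p → Blocked E S p

section DSepAux

variable {V : Type*} {E : V → V → Prop}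

lemma getElem?_some_lt {p : List V} {i : ℕ} {w : V} (h : p[i]? = some w) : i < p.length := by
  by_contra hc
  rw [List.getElem?_eq_none (by omega)] at h
  cases h

lemma colliderAt_rev {p : List V} {i : ℕ} (h : ColliderAt E p i) :
    ColliderAt E p.reverse (p.length - 1 - i) := by
  obtain ⟨hi, a, w, b, ha, hw, hb, hEa, hEb⟩ := h
  have h1 : i + 1 < p.length := getElem?_some_lt hb
  refine ⟨by omega, b, w, a, ?_, ?_, ?_, hEb, hEa⟩
  · rw [List.getElem?_reverse (by omega : p.length - 1 - i - 1 < p.length),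
      show p.length - 1 - (p.length - 1 - i - 1) = i + 1 by omega]
    exact hb
  · rw [List.getElem?_reverse (by omega : p.length - 1 - i < p.length),
      show p.length - 1 - (p.length - 1 - i) = i by omega]
    exact hw
  · rw [List.getElem?_reverse (by omega : p.length - 1 - i + 1 < p.length),
      show p.length - 1 - (p.length - 1 - i + 1) = i - 1 by omega]
    exact ha

lemma isPath_reverse {u v : V} {p : List V} (h : IsPath E u v p) : IsPath E v u p.reverse := by
  obtain ⟨hnd, hch, hh, hl⟩ := h
  refine ⟨List.nodup_reverse.mpr hnd, ?_, ?_, ?_⟩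
  · exact List.isChain_reverse.mpr (hch.imp fun _ _ h => Or.symm h)
  · rw [List.head?_reverse]; exact hl
  · rw [List.getLast?_reverse]; exact hh

lemma blocked_reverse {S : Set V} {p : List V} (h : Blocked E S p.reverse) : Blocked E S p := by
  rcases h with ⟨i, w, hi0, hi1, hw, hnc, hwS⟩ | ⟨i, w, hc, hw, hd⟩
  · rw [List.length_reverse] at hi1
    rw [List.getElem?_reverse (by omega : i < p.length)] at hw
    refine Or.inl ⟨p.length - 1 - i, w, by omega, by omega, hw, ?_, hwS⟩
    intro hcol
    have := colliderAt_rev hcol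
    rw [show p.length - 1 - (p.length - 1 - i) = i by omega] at this
    exact hnc this
  · have hi : i < p.length := by
      have := getElem?_some_lt hw
      rwa [List.length_reverse] at this
    rw [List.getElem?_reverse hi] at hw
    have hc' := colliderAt_rev hc
    rw [List.reverse_reverse, List.length_reverse] at hc'
    exact Or.inr ⟨p.length - 1 - i, w, hc', hw, hd⟩

lemma dsep_parents (hD : Acyclic E) {A B : V} (hAB : A ≠ B)
    (hnadj : ¬ Adj E A B) (hnd : ¬ Relation.TransGen E B A) :
    DSep E {w | E w B} A B := by
  intro p hp
  obtain ⟨hnodup, hch, hhead, hlast⟩ := hp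
  set n := p.length with hn
  set g : ℕ → V := fun i => p.getD i A with hgdef
  have hnpos : 0 < n := by
    cases p with
    | nil => simp at hhead
    | cons a l => simp [hn]
  have hg : ∀ i, i < n → p[i]? = some (g i) := by
    intro i hi
    rw [List.getElem?_eq_getElem hi]
    simp only [hgdef]
    rw [List.getD_eq_getElem p A hi]
  have hgA : g 0 = A := by
    rw [List.head?_eq_getElem?, hg 0 hnpos] at hhead
    exact (Option.some_injective _ hhead)
  have hgB : g (n - 1) = B := by
    rw [List.getLast?_eq_getElem?, hg (n-1) (by omega)] at hlast
    exact (Option.some_injective _ hlast)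
  have hadj : ∀ i, i + 1 < n → Adj E (g i) (g (i+1)) := by
    intro i hi
    have := List.isChain_iff_getElem.mp hch i (by omega)
    have e1 : g i = p[i]'(by omega) := by rw [hgdef]; exact List.getD_eq_getElem p A (by omega)
    have e2 : g (i+1) = p[i+1]'(by omega) := by rw [hgdef]; exact List.getD_eq_getElem p A (by omega)
    rw [e1, e2]
    simpa using this
  have h3 : 3 ≤ n := by
    by_contra hc
    interval_cases n
    · exact hAB (hgA ▸ hgB ▸ rfl)
    · have := hadj 0 (by omega)
      rw [hgA] at this
      have h1 : g 1 = B := by simpa using hgB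
      rw [h1] at this
      exact hnadj this
  -- the last edge
  have hlastadj : Adj E (g (n-2)) (g (n-1)) := by
    have := hadj (n-2) (by omega)
    rwa [show n - 2 + 1 = n - 1 by omega] at this
  rw [hgB] at hlastadj
  rcases hlastadj with hWB | hBW
  · -- edge into B: the parent g (n-2) is a non-collider in S
    refine Or.inl ⟨n - 2, g (n-2), by omega, by omega, hg (n-2) (by omega), ?_, hWB⟩
    rintro ⟨-, a, w, b, ha, hw, hb, hEa, hEb⟩
    rw [hg (n-2) (by omega)] at hw
    rw [show n - 2 + 1 = n - 1 by omega, hg (n-1) (by omega)] at hb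
    obtain rfl : w = g (n-2) := (Option.some_injective _ hw).symm ▸ rfl
    have hb' : b = B := by
      rw [← hgB]
      exact (Option.some_injective _ hb).symm
    rw [hb'] at hEb
    exact hD B (Relation.TransGen.head hEb (Relation.TransGen.single hWB))
  · -- edge out of B: find the collider nearest to B
    set T : ℕ → Prop := fun i => ∀ j, i ≤ j → j + 1 ≤ n - 1 → E (g (j+1)) (g j) with hT
    have hTn2 : T (n-2) := by
      intro j hj1 hj2
      have hj : j = n - 2 := by omega
      subst hj
      rwa [show n - 2 + 1 = n - 1 by omega, hgB]
    have hT0 : ¬ T 0 := by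
      intro h0
      apply hnd
      have key : ∀ d, 1 ≤ d → d ≤ n - 1 → Relation.TransGen E (g d) (g 0) := by
        intro d
        induction d with
        | zero => omega
        | succ d ih =>
          intro _ hd
          rcases Nat.eq_zero_or_pos d with rfl | hdpos
          · exact Relation.TransGen.single (h0 0 (by omega) (by omega))
          · exact Relation.TransGen.head (h0 d (by omega) (by omega)) (ih hdpos (by omega))
      have := key (n-1) (by omega) le_rfl
      rwa [hgA, hgB] at this
    have hne : {i | T i}.Nonempty := ⟨n - 2, hTn2⟩
    set m := sInf {i | T i} with hm
    have hmT : T m := Nat.sInf_mem hne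
    have hmle : m ≤ n - 2 := Nat.sInf_le hTn2
    have hmpos : 0 < m := by
      rcases Nat.eq_zero_or_pos m with h0 | h
      · exact absurd (h0 ▸ hmT) hT0
      · exact h
    have hmprev : ¬ T (m - 1) := Nat.notMem_of_lt_sInf (s := {i | T i})
      (show m - 1 < sInf {i | T i} by rw [← hm]; omega)
    have hnotE : ¬ E (g m) (g (m-1)) := by
      intro hE
      apply hmprev
      intro j hj1 hj2
      rcases Nat.lt_or_ge j m with hlt | hge
      · have hj : j = m - 1 := by omega
        subst hj
        rwa [show m - 1 + 1 = m by omega]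
      · exact hmT j hge hj2
    have hEleft : E (g (m-1)) (g m) := by
      have := hadj (m-1) (by omega)
      rw [show m - 1 + 1 = m by omega] at this
      rcases this with h | h
      · exact h
      · exact absurd h hnotE
    have hEright : E (g (m+1)) (g m) := hmT m le_rfl (by omega)
    have hcol : ColliderAt E p m :=
      ⟨hmpos, g (m-1), g m, g (m+1), hg (m-1) (by omega), hg m (by omega),
        hg (m+1) (by omega), hEleft, hEright⟩
    have hBm : Relation.TransGen E B (g m) := by
      have key : ∀ d, 1 ≤ d → m + d ≤ n - 1 → Relation.TransGen E (g (m + d)) (g m) := by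
        intro d
        induction d with
        | zero => omega
        | succ d ih =>
          intro _ hd
          rcases Nat.eq_zero_or_pos d with rfl | hdpos
          · exact Relation.TransGen.single (hmT m le_rfl (by omega))
          · exact Relation.TransGen.head
              (by have := hmT (m + d) (by omega) (by omega)
                  rwa [show m + d + 1 = m + (d+1) by omega] at this)
              (ih hdpos (by omega))
      have := key (n - 1 - m) (by omega) (by omega)
      rwa [show m + (n - 1 - m) = n - 1 by omega, hgB] at this
    refine Or.inr ⟨m, g m, hcol, hg m (by omega), ?_⟩
    intro d hdesc hdS
    exact hD B (hBm.trans (Relation.TransGen.tail' hdesc hdS))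

end DSepAux

/-- Non-adjacent nodes of a DAG consistent with τ can be d-separated by a set
contained in tiers at most max(τ(A), τ(B)). -/
theorem dsep_by_earlier_tiers {V : Type*} (E : V → V → Prop) (hD : Acyclic E)
    (τ : V → ℕ) (hcons : ∀ u v, E u v → τ u ≤ τ v)
    (A B : V) (hAB : A ≠ B) (hnadj : ¬ Adj E A B) :
    ∃ S : Set V, DSep E S A B ∧ ∀ w ∈ S, τ w ≤ max (τ A) (τ B) := by
  by_cases hnd : Relation.TransGen E B A
  · have hnd' : ¬ Relation.TransGen E A B := fun h => hD A (h.trans hnd)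
    refine ⟨{w | E w A}, ?_, fun w hw => le_trans (hcons w A hw) (le_max_left _ _)⟩
    intro p hp
    exact blocked_reverse
      (dsep_parents hD hAB.symm (fun h => hnadj (Or.symm h)) hnd' p.reverse (isPath_reverse hp))
  · exact ⟨{w | E w B}, dsep_parents hD hAB hnadj hnd,
      fun w hw => le_trans (hcons w B hw) (le_max_right _ _)⟩
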